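/- Let α ∈ ℝ, 1 ≤ s < ∞, λ ≥ 3, let T be an operator, and let f ∈ L^1(ℝ^d) have compact support. Suppose that for every cube Q there is a 1/2-sparse family F_Q of subcubes of Q such that |T(f χ_{Q*})(x)| ≤ C Σ_{R∈F_Q} χ_R(x) |R*|^{α/d} (⨍_{R*} |f|^s)^{1/s} for a.e. x ∈ Q, where Q* = D_λ Q and R* = D_λ R. Then there is a 1/(2λ^d)-sparse family of cubes S = S(f) such that |Tf(x)| ≤ C Σ_{Q∈S} χ_Q(x) |Q|^{α/d} (⨍_Q |f|^s)^{1/s} for a.e. x ∈ ℝ^d. -/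

import Mathlib

open MeasureTheory ENNReal NNReal Set

noncomputable section

/-- A half-open axis-parallel cube in `ℝ^d`, given by its corner and (positive) sidelength. -/
structure Cube (d : ℕ) where
  corner : Fin d → ℝ
  side : ℝ
  side_pos : 0 < side

namespace Cube

variable {d : ℕ}

/-- The set of points of the cube: `[x_1, x_1+l) × ⋯ × [x_d, x_d+l)`. -/
def toSet (Q : Cube d) : Set (Fin d → ℝ) :=
  {y | ∀ i, Q.corner i ≤ y i ∧ y i < Q.corner i + Q.side}

/-- The translate `Q + l(Q) m` of a cube. -/
def translate (Q : Cube d) (m : Fin d → ℤ) : Cube d :=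
  ⟨fun i => Q.corner i + Q.side * (m i : ℝ), Q.side, Q.side_pos⟩

/-- The corner child `x(Q) + (1/2)(Q - x(Q))` of a cube. -/
def cornerChild (Q : Cube d) : Cube d :=
  ⟨Q.corner, Q.side / 2, by have := Q.side_pos; linarith⟩

/-- The threefold expansion `x(Q) + 3(Q - x(Q))` of a cube from its corner. -/
def expand3 (Q : Cube d) : Cube d :=
  ⟨Q.corner, 3 * Q.side, by have := Q.side_pos; linarith⟩

/-- The dilate `D_c Q`: cube with the same center as `Q` and sidelength `c·l(Q)`. -/
def dilate (Q : Cube d) (c : ℝ) (hc : 0 < c) : Cube d :=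
  ⟨fun i => Q.corner i + Q.side / 2 - c * Q.side / 2, c * Q.side, by
    have := Q.side_pos; positivity⟩

end Cube

/-- A dyadic lattice in `ℝ^d`: a family of generations of cubes, each generation formed by
all translates of one of its cubes, and each generation containing a cube whose corner child
belongs to the next generation. -/
structure DyadicLattice (d : ℕ) where
  gen : ℤ → Set (Cube d)
  gen_translates : ∀ k, ∃ Q ∈ gen k, gen k = {R | ∃ m : Fin d → ℤ, R = Q.translate m}
  cornerChild_mem : ∀ k, ∃ Q ∈ gen k, Q.cornerChild ∈ gen (k + 1)

/-- The collection of all cubes of a dyadic lattice. -/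
def DyadicLattice.cubes {d : ℕ} (D : DyadicLattice d) : Set (Cube d) := ⋃ k, D.gen k

/-- The quadrant of a dyadic lattice containing `x`: the union of all cubes of the lattice
containing `x`. -/
def DyadicLattice.quadrant {d : ℕ} (D : DyadicLattice d) (x : Fin d → ℝ) :
    Set (Fin d → ℝ) :=
  ⋃ Q ∈ {Q : Cube d | Q ∈ D.cubes ∧ x ∈ Q.toSet}, Q.toSet

/-- A weight: a locally integrable, a.e. positive (and finite) function. -/
def IsWeight {d : ℕ} (w : (Fin d → ℝ) → ℝ) : Prop :=
  LocallyIntegrable w volume ∧ ∀ᵐ x ∂(volume : Measure (Fin d → ℝ)), 0 < w x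

/-- The measure `w dx` associated to a weight. -/
def wMeasure {d : ℕ} (w : (Fin d → ℝ) → ℝ) : Measure (Fin d → ℝ) :=
  volume.withDensity fun x => ENNReal.ofReal (w x)

/-- `w(E) = ∫_E w dx`. -/
def wInt {d : ℕ} (w : (Fin d → ℝ) → ℝ) (E : Set (Fin d → ℝ)) : ℝ≥0∞ :=
  ∫⁻ x in E, ENNReal.ofReal (w x)

/-- The `L^q` norm (with `q = ∞` allowed) of an `ℝ≥0∞`-valued function. -/
def eLpNormENN {X : Type*} [MeasurableSpace X] (g : X → ℝ≥0∞) (q : ℝ≥0∞)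
    (μ : Measure X) : ℝ≥0∞ :=
  if q = ∞ then essSup g μ
  else (∫⁻ x, g x ^ q.toReal ∂μ) ^ (1 / q.toReal)

/-- The weak `L^q` quasinorm (with `q = ∞` allowed, interpreted as the `L^∞` norm) of an
`ℝ≥0∞`-valued function: `sup_{t>0} t · μ{g > t}^{1/q}`. -/
def wnormENN {X : Type*} [MeasurableSpace X] (g : X → ℝ≥0∞) (q : ℝ≥0∞)
    (μ : Measure X) : ℝ≥0∞ :=
  if q = ∞ then essSup g μ
  else ⨆ t : ℝ≥0, (t : ℝ≥0∞) * μ {x | (t : ℝ≥0∞) < g x} ^ (1 / q.toReal)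

/-- The weighted dyadic fractional maximal operator
`M^D_{α,w} f(x) = sup_{Q ∈ D, x ∈ Q} w(Q)^{α/d-1} ∫_Q |f| w`. -/
def MwDyadic {d : ℕ} (D : DyadicLattice d) (α : ℝ) (w f : (Fin d → ℝ) → ℝ)
    (x : Fin d → ℝ) : ℝ≥0∞ :=
  ⨆ (Q : Cube d) (_ : Q ∈ D.cubes) (_ : x ∈ Q.toSet),
    wInt w Q.toSet ^ (α / (d : ℝ) - 1) *
      ∫⁻ y in Q.toSet, (‖f y‖₊ : ℝ≥0∞) * ENNReal.ofReal (w y)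

/-- The dyadic fractional maximal operator `M^D_α f(x) = sup_{Q ∈ D, x ∈ Q} |Q|^{α/d} ⨍_Q |f|`. -/
def MfracDyadic {d : ℕ} (D : DyadicLattice d) (α : ℝ) (f : (Fin d → ℝ) → ℝ)
    (x : Fin d → ℝ) : ℝ≥0∞ :=
  ⨆ (Q : Cube d) (_ : Q ∈ D.cubes) (_ : x ∈ Q.toSet),
    volume Q.toSet ^ (α / (d : ℝ) - 1) * ∫⁻ y in Q.toSet, (‖f y‖₊ : ℝ≥0∞)

/-- The fractional maximal operator `M_α f(x) = sup_{Q ∋ x} |Q|^{α/d} ⨍_Q |f|`,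
supremum over all cubes containing `x`. -/
def Mfrac {d : ℕ} (α : ℝ) (f : (Fin d → ℝ) → ℝ) (x : Fin d → ℝ) : ℝ≥0∞ :=
  ⨆ (Q : Cube d) (_ : x ∈ Q.toSet),
    volume Q.toSet ^ (α / (d : ℝ) - 1) * ∫⁻ y in Q.toSet, (‖f y‖₊ : ℝ≥0∞)

/-- The weighted fractional maximal operator
`M_{α,w} f(x) = sup_{Q ∋ x} w(Q)^{α/d-1} ∫_Q |f| w`, supremum over all cubes containing `x`. -/
def Mwfrac {d : ℕ} (α : ℝ) (w f : (Fin d → ℝ) → ℝ) (x : Fin d → ℝ) : ℝ≥0∞ :=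
  ⨆ (Q : Cube d) (_ : x ∈ Q.toSet),
    wInt w Q.toSet ^ (α / (d : ℝ) - 1) *
      ∫⁻ y in Q.toSet, (‖f y‖₊ : ℝ≥0∞) * ENNReal.ofReal (w y)

/-- An `η`-sparse collection of cubes: each cube `Q` has a measurable subset `G(Q)` with
`|G(Q)| ≥ η|Q|`, the sets `G(Q)` being pairwise disjoint. -/
def IsSparseCubes {d : ℕ} (η : ℝ) (S : Set (Cube d)) : Prop :=
  ∃ G : Cube d → Set (Fin d → ℝ),
    (∀ Q ∈ S, G Q ⊆ Q.toSet ∧ MeasurableSet (G Q) ∧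
      ENNReal.ofReal η * volume Q.toSet ≤ volume (G Q)) ∧
    S.PairwiseDisjoint G

/-- The sparse operator `A_S^α f(x) = Σ_{Q ∈ S} χ_Q(x) |Q|^{α/d} ⨍_Q |f|`. -/
def sparseOp {d : ℕ} (α : ℝ) (S : Set (Cube d)) (f : (Fin d → ℝ) → ℝ)
    (x : Fin d → ℝ) : ℝ≥0∞ :=
  ∑' Q : S, (Q : Cube d).toSet.indicator
    (fun _ => volume (Q : Cube d).toSet ^ (α / (d : ℝ) - 1) *
      ∫⁻ y in (Q : Cube d).toSet, (‖f y‖₊ : ℝ≥0∞)) x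

/-- The `A_{p,q}^α` constant of a pair of weights:
`[v,w] = sup_Q |Q|^{α/d-1} (∫_Q v^{-p'/p})^{1/p'} (∫_Q w)^{1/q}` where `p' = p/(p-1)`. -/
def apqConst {d : ℕ} (p q α : ℝ) (v w : (Fin d → ℝ) → ℝ) : ℝ≥0∞ :=
  ⨆ Q : Cube d,
    volume Q.toSet ^ (α / (d : ℝ) - 1) *
      (∫⁻ x in Q.toSet, ENNReal.ofReal (v x ^ (-(p / (p - 1)) / p))) ^ ((p - 1) / p) *
      (∫⁻ x in Q.toSet, ENNReal.ofReal (w x)) ^ (1 / q)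

/-- The Muckenhoupt `A_∞` condition: `sup_Q exp(⨍_Q log w⁻¹) · ⨍_Q w < ∞`. -/
def IsAinfty {d : ℕ} (w : (Fin d → ℝ) → ℝ) : Prop :=
  ∃ C : ℝ, ∀ Q : Cube d,
    Real.exp (⨍ x in Q.toSet, Real.log (w x)⁻¹ ∂volume) *
      (⨍ x in Q.toSet, w x ∂volume) ≤ C

/-- The Euclidean norm of a point of `ℝ^d`. -/
def euclNorm {d : ℕ} (x : Fin d → ℝ) : ℝ := Real.sqrt (∑ i, x i ^ 2)

/-- The auxiliary maximal operator `M_{T,λ}` controlling oscillations of truncations of `T`: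
`M_{T,λ} f(x) = sup_{Q ∋ x} ess sup_{x',x'' ∈ Q} |T(fχ_{ℝ^d∖Q*})(x') − T(fχ_{ℝ^d∖Q*})(x'')|`. -/
def MT {d : ℕ} (T : ((Fin d → ℝ) → ℝ) → (Fin d → ℝ) → ℝ) (lam : ℝ) (hlam : 0 < lam)
    (f : (Fin d → ℝ) → ℝ) (x : Fin d → ℝ) : ℝ≥0∞ :=
  ⨆ (Q : Cube d) (_ : x ∈ Q.toSet),
    essSup
      (fun z : (Fin d → ℝ) × (Fin d → ℝ) =>
        (‖T (((Q.dilate lam hlam).toSet)ᶜ.indicator f) z.1 -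
            T (((Q.dilate lam hlam).toSet)ᶜ.indicator f) z.2‖₊ : ℝ≥0∞))
      ((volume.restrict Q.toSet).prod (volume.restrict Q.toSet))

end

noncomputable section SparseAux

namespace SparseAux

variable {d : ℕ}

lemma toSet_eq (Q : Cube d) :
    Q.toSet = Set.univ.pi fun i => Set.Ico (Q.corner i) (Q.corner i + Q.side) := by
  ext y; simp [Cube.toSet, Set.mem_pi]

lemma measurable_toSet (Q : Cube d) : MeasurableSet Q.toSet := by
  rw [toSet_eq]; exact MeasurableSet.univ_pi fun i => measurableSet_Ico

lemma volume_toSet (Q : Cube d) : volume Q.toSet = ENNReal.ofReal (Q.side ^ d) := by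
  rw [toSet_eq, volume_pi_pi]
  simp [Real.volume_Ico, ← ENNReal.ofReal_pow Q.side_pos.le]

lemma subset_dilate (Q : Cube d) {c : ℝ} (hc0 : 0 < c) (hc : 1 ≤ c) :
    Q.toSet ⊆ (Q.dilate c hc0).toSet := by
  intro y hy i
  have h := hy i
  have hs := Q.side_pos
  simp only [Cube.dilate, Cube.toSet, Set.mem_setOf_eq] at h ⊢
  constructor
  · nlinarith [h.1]
  · nlinarith [h.2]

lemma dilate_injective {c : ℝ} (hc0 : 0 < c) :
    Function.Injective (fun Q : Cube d => Q.dilate c hc0) := by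
  rintro ⟨qc, qs, hq⟩ ⟨rc, rs, hr⟩ h
  simp only [Cube.dilate, Cube.mk.injEq] at h
  obtain ⟨h1, h2⟩ := h
  have hs : qs = rs := mul_left_cancel₀ hc0.ne' h2
  subst hs
  simp only [Cube.mk.injEq, and_true]
  funext i
  have := congrFun h1 i
  linarith

/-- The cubes of the partition of `ℝ^d` adapted to `[-L,L)^d`. -/
def P (d : ℕ) (L : ℝ) (hL : 0 < L) (m : ℕ) (k : Fin d → Fin 3) : Cube d :=
  ⟨fun i => -(3 ^ (m + 1) * L) + ((k i : ℕ) : ℝ) * (2 * 3 ^ m * L), 2 * 3 ^ m * L,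
    by positivity⟩

lemma cover (d : ℕ) (L : ℝ) (hL : 0 < L) (x : Fin d → ℝ) :
    ∃ m : ℕ, ∃ k : Fin d → Fin 3, (m = 0 ∨ k ≠ fun _ => 1) ∧ x ∈ (P d L hL m k).toSet := by
  have hex : ∃ n : ℕ, ∀ i, -(3 ^ n * L) ≤ x i ∧ x i < 3 ^ n * L := by
    set B : ℝ := ∑ i, |x i| with hB
    have hB0 : 0 ≤ B := Finset.sum_nonneg fun i _ => abs_nonneg _
    obtain ⟨n, hn⟩ := pow_unbounded_of_one_lt (B / L) (by norm_num : (1 : ℝ) < 3)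
    refine ⟨n, fun i => ?_⟩
    have hiB : |x i| ≤ B := Finset.single_le_sum (fun j _ => abs_nonneg (x j)) (Finset.mem_univ i)
    have hBL : B < 3 ^ n * L := by
      have := (div_lt_iff₀ hL).1 hn
      linarith
    have h1 : |x i| < 3 ^ n * L := lt_of_le_of_lt hiB hBL
    have := abs_lt.1 h1
    exact ⟨by linarith [this.1], this.2⟩
  classical
  match hm : Nat.find hex with
  | 0 =>
    have h0 := Nat.find_spec hex
    rw [hm] at h0
    refine ⟨0, fun _ => 1, Or.inl rfl, fun i => ?_⟩
    have h1 := h0 i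
    simp only [P, pow_zero, pow_one, one_mul] at h1 ⊢
    have hcast : (((1 : Fin 3) : ℕ) : ℝ) = 1 := by norm_num
    rw [hcast]
    have e : (3 : ℝ) ^ (0 + 1) = 3 := by norm_num
    rw [e]
    constructor <;> linarith [h1.1, h1.2]
  | Nat.succ m =>
    have h0 := Nat.find_spec hex
    rw [hm] at h0
    have hnot : ¬∀ i, -(3 ^ m * L) ≤ x i ∧ x i < 3 ^ m * L := by
      have := Nat.find_min hex (by omega : m < Nat.find hex)
      simpa using this
    push_neg at hnot
    obtain ⟨j, hj⟩ := hnot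
    refine ⟨m, fun i => if x i < -(3 ^ m * L) then 0 else if x i < 3 ^ m * L then 1 else 2,
      Or.inr ?_, fun i => ?_⟩
    · intro hcontra
      have hj' := congrFun hcontra j
      split_ifs at hj' with h1 h2
      · exact absurd hj' (by decide)
      · exact absurd h2 (not_lt.2 (hj (not_lt.1 h1)))
      · exact absurd hj' (by decide)
    · have hbig := h0 i
      have h3 : (3 : ℝ) ^ (m + 1) = 3 * 3 ^ m := by ring
      have hp : (0 : ℝ) < 3 ^ m * L := by positivity
      simp only [P]
      split_ifs with h1 h2
      · have hcast : (((0 : Fin 3) : ℕ) : ℝ) = 0 := by norm_num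
        rw [hcast]
        rw [Nat.succ_eq_add_one, h3] at hbig
        constructor
        · nlinarith [hbig.1]
        · nlinarith
      · push_neg at h1
        have hcast : (((1 : Fin 3) : ℕ) : ℝ) = 1 := by norm_num
        rw [hcast]
        constructor <;> nlinarith
      · push_neg at h1 h2
        rw [Nat.succ_eq_add_one, h3] at hbig
        have hcast : (((2 : Fin 3) : ℕ) : ℝ) = 2 := by norm_num
        rw [hcast]
        constructor <;> nlinarith [hbig.2]

lemma mem_P_bounds {L : ℝ} {hL : 0 < L} {m : ℕ} {k : Fin d → Fin 3} {y : Fin d → ℝ}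
    (hy : y ∈ (P d L hL m k).toSet) (i : Fin d) :
    -(3 ^ (m + 1) * L) ≤ y i ∧ y i < 3 ^ (m + 1) * L := by
  have h := hy i
  simp only [P] at h
  have hk0 : (0 : ℝ) ≤ ((k i : ℕ) : ℝ) := by positivity
  have hk2 : ((k i : ℕ) : ℝ) ≤ 2 := by
    have h1 := (k i).isLt
    have h2 : (k i : ℕ) ≤ 2 := by omega
    exact_mod_cast h2
  have hp : (0 : ℝ) < 3 ^ m * L := by positivity
  have h3 : (3 : ℝ) ^ (m + 1) = 3 * 3 ^ m := by ring
  constructor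
  · nlinarith [h.1]
  · nlinarith [h.2]

lemma notin_inner {L : ℝ} {hL : 0 < L} {m : ℕ} {k : Fin d → Fin 3} {y : Fin d → ℝ}
    (hy : y ∈ (P d L hL m k).toSet) {j : Fin d} (hkj : k j ≠ 1) :
    y j < -(3 ^ m * L) ∨ 3 ^ m * L ≤ y j := by
  have h := hy j
  simp only [P] at h
  have hp : (0 : ℝ) < 3 ^ m * L := by positivity
  have h3 : (3 : ℝ) ^ (m + 1) = 3 * 3 ^ m := by ring
  have hval : (k j : ℕ) = 0 ∨ (k j : ℕ) = 2 := by
    have h1 := (k j).isLt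
    have h2 : (k j : ℕ) ≠ 1 := fun hc => hkj (Fin.ext (by simp [hc]))
    omega
  rcases hval with hv | hv
  · left
    rw [hv] at h
    norm_num at h
    nlinarith [h.2]
  · right
    rw [hv] at h
    norm_num at h
    nlinarith [h.1]

lemma P_disjoint_lt (L : ℝ) (hL : 0 < L) {m m' : ℕ} {k k' : Fin d → Fin 3}
    (hmm : m < m') (hk' : k' ≠ fun _ => 1) :
    Disjoint (P d L hL m k).toSet (P d L hL m' k').toSet := by
  rw [Set.disjoint_left]
  intro y hy hy'
  have hne : ∃ j, k' j ≠ 1 := by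
    by_contra hc
    push_neg at hc
    exact hk' (funext hc)
  obtain ⟨j, hj⟩ := hne
  have hout := notin_inner hy' hj
  have hin := mem_P_bounds hy j
  have hmono : (3 : ℝ) ^ (m + 1) * L ≤ 3 ^ m' * L := by
    have : (3 : ℝ) ^ (m + 1) ≤ 3 ^ m' := pow_le_pow_right₀ (by norm_num) (by omega)
    nlinarith
  rcases hout with h | h
  · linarith [hin.1]
  · linarith [hin.2]

lemma P_disjoint (L : ℝ) (hL : 0 < L) {m m' : ℕ} {k k' : Fin d → Fin 3}
    (hm : m = 0 ∨ k ≠ fun _ => 1) (hm' : m' = 0 ∨ k' ≠ fun _ => 1)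
    (hne : (m, k) ≠ (m', k')) :
    Disjoint (P d L hL m k).toSet (P d L hL m' k').toSet := by
  rcases lt_trichotomy m m' with h | h | h
  · have hk' : k' ≠ fun _ => 1 := by
      rcases hm' with h0 | h0
      · omega
      · exact h0
    exact P_disjoint_lt L hL h hk'
  · subst h
    have hkk : k ≠ k' := fun hc => hne (by rw [hc])
    have hjj : ∃ j, k j ≠ k' j := by
      by_contra hc
      push_neg at hc
      exact hkk (funext hc)
    obtain ⟨j, hj⟩ := hjj
    rw [Set.disjoint_left]
    intro y hy hy'
    have h1 := hy j
    have h2 := hy' j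
    simp only [P] at h1 h2
    have hp : (0 : ℝ) < 3 ^ m * L := by positivity
    have hc1 : ((k j : ℕ) : ℝ) < ((k' j : ℕ) : ℝ) + 1 := by nlinarith [h1.1, h2.2]
    have hc2 : ((k' j : ℕ) : ℝ) < ((k j : ℕ) : ℝ) + 1 := by nlinarith [h2.1, h1.2]
    have hc1' : (k j : ℕ) < (k' j : ℕ) + 1 := by exact_mod_cast hc1
    have hc2' : (k' j : ℕ) < (k j : ℕ) + 1 := by exact_mod_cast hc2
    exact hj (Fin.ext (by omega))
  · have hk : k ≠ fun _ => 1 := by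
      rcases hm with h0 | h0
      · omega
      · exact h0
    exact (P_disjoint_lt L hL h hk).symm

lemma support_subset_dilate {L r : ℝ} (hr : 0 ≤ r) (hLr : L = r + 1) (hL : 0 < L)
    {f : (Fin d → ℝ) → ℝ} (hf : ∀ y, f y ≠ 0 → ∀ i, |y i| ≤ r)
    {lam : ℝ} (hlam0 : 0 < lam) (hlam : 3 ≤ lam) (m : ℕ) (k : Fin d → Fin 3) :
    Function.support f ⊆ ((P d L hL m k).dilate lam hlam0).toSet := by
  intro y hy i
  have hyi := abs_le.1 (hf y hy i)
  have hpm : (1 : ℝ) ≤ 3 ^ m := one_le_pow₀ (by norm_num)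
  have hp : (0 : ℝ) < 3 ^ m * L := by positivity
  have hLt : L ≤ 3 ^ m * L := by nlinarith
  have hk0 : (0 : ℝ) ≤ ((k i : ℕ) : ℝ) := by positivity
  have hk2 : ((k i : ℕ) : ℝ) ≤ 2 := by
    have h1 := (k i).isLt
    have h2 : (k i : ℕ) ≤ 2 := by omega
    exact_mod_cast h2
  have ha2t : ((k i : ℕ) : ℝ) * (2 * 3 ^ m * L) ≤ 4 * (3 ^ m * L) := by nlinarith
  have ha0t : (0 : ℝ) ≤ ((k i : ℕ) : ℝ) * (2 * 3 ^ m * L) := by positivity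
  have hlt : 3 * (3 ^ m * L) ≤ lam * (3 ^ m * L) := by nlinarith
  have hlt2 : 3 * (2 * 3 ^ m * L) ≤ lam * (2 * 3 ^ m * L) := by nlinarith
  have h3 : (3 : ℝ) ^ (m + 1) * L = 3 * (3 ^ m * L) := by ring
  simp only [Cube.dilate, Cube.toSet, P, Set.mem_setOf_eq]
  rw [h3]
  constructor
  · linarith [hyi.1]
  · linarith [hyi.2]

end SparseAux

end SparseAux


/-- from local sparse domination to global sparse domination. -/
theorem local_to_global_sparse
    {d : ℕ} (hd : 0 < d) (α s lam : ℝ) (hs : 1 ≤ s) (hlam : 3 ≤ lam)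
    (T : ((Fin d → ℝ) → ℝ) → (Fin d → ℝ) → ℝ) (C : ℝ≥0∞)
    (f : (Fin d → ℝ) → ℝ) (hf : Integrable f volume) (hsupp : HasCompactSupport f)
    (hloc : ∀ Q : Cube d, ∃ F : Set (Cube d),
      (∀ R ∈ F, R.toSet ⊆ Q.toSet) ∧ IsSparseCubes (1 / 2) F ∧
      ∀ᵐ x ∂(volume : Measure (Fin d → ℝ)), x ∈ Q.toSet →
        (‖T ((Q.dilate lam (by linarith)).toSet.indicator f) x‖₊ : ℝ≥0∞) ≤
          C * ∑' R : F, (R : Cube d).toSet.indicator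
            (fun _ =>
              volume ((R : Cube d).dilate lam (by linarith)).toSet ^ (α / (d : ℝ)) *
                ((volume ((R : Cube d).dilate lam (by linarith)).toSet)⁻¹ *
                  ∫⁻ y in ((R : Cube d).dilate lam (by linarith)).toSet,
                    (‖f y‖₊ : ℝ≥0∞) ^ s) ^ (1 / s)) x) :
    ∃ S : Set (Cube d), IsSparseCubes (1 / (2 * lam ^ d)) S ∧
      ∀ᵐ x ∂(volume : Measure (Fin d → ℝ)),
        (‖T f x‖₊ : ℝ≥0∞) ≤
          C * ∑' Q : S, (Q : Cube d).toSet.indicator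
            (fun _ => volume (Q : Cube d).toSet ^ (α / (d : ℝ)) *
              ((volume (Q : Cube d).toSet)⁻¹ *
                ∫⁻ y in (Q : Cube d).toSet, (‖f y‖₊ : ℝ≥0∞) ^ s) ^ (1 / s)) x := by
  classical
  have hlam0 : (0 : ℝ) < lam := by linarith
  have hlam1 : (1 : ℝ) ≤ lam := by linarith
  -- a bound on the support of f
  have hcpt : IsCompact (tsupport f) := hsupp
  obtain ⟨r, hr, hrball⟩ := hcpt.isBounded.subset_closedBall_lt 0 0
  set L := r + 1 with hLdef
  have hL : 0 < L := by linarith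
  have hfr : ∀ y, f y ≠ 0 → ∀ i, |y i| ≤ r := by
    intro y hy i
    have h1 : y ∈ tsupport f := subset_tsupport f hy
    have h2 := hrball h1
    rw [Metric.mem_closedBall, dist_zero_right] at h2
    calc |y i| = ‖y i‖ := (Real.norm_eq_abs _).symm
      _ ≤ ‖y‖ := norm_le_pi_norm y i
      _ ≤ r := h2
  choose F hFsub hFsp hFbd using hloc
  choose G hG1 hG2 using hFsp
  set Pc : ℕ × (Fin d → Fin 3) → Cube d := fun p => SparseAux.P d L hL p.1 p.2 with hPc
  set J : Set (ℕ × (Fin d → Fin 3)) := {p | p.1 = 0 ∨ p.2 ≠ fun _ => 1} with hJ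
  refine ⟨{Q | ∃ p ∈ J, ∃ R ∈ F (Pc p), Q = R.dilate lam hlam0}, ?_, ?_⟩
  · -- sparseness
    refine ⟨fun Q =>
      @dite _ (∃ pr : (ℕ × (Fin d → Fin 3)) × Cube d,
          pr.1 ∈ J ∧ pr.2 ∈ F (Pc pr.1) ∧ Q = pr.2.dilate lam hlam0)
        (Classical.propDecidable _)
        (fun h => G (Pc h.choose.1) h.choose.2) (fun _ => ∅), ?_, ?_⟩
    · rintro Q ⟨p, hpJ, R, hRF, rfl⟩
      have hex : ∃ pr : (ℕ × (Fin d → Fin 3)) × Cube d,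
          pr.1 ∈ J ∧ pr.2 ∈ F (Pc pr.1) ∧ R.dilate lam hlam0 = pr.2.dilate lam hlam0 :=
        ⟨(p, R), hpJ, hRF, rfl⟩
      beta_reduce
      rw [dif_pos hex]
      obtain ⟨hq1, hq2, hq3⟩ := hex.choose_spec
      have hts : (R.dilate lam hlam0).toSet = (hex.choose.2.dilate lam hlam0).toSet :=
        congrArg Cube.toSet hq3
      have hGp := hG1 (Pc hex.choose.1) hex.choose.2 hq2
      refine ⟨?_, hGp.2.1, ?_⟩
      · rw [hts]
        exact hGp.1.trans (SparseAux.subset_dilate _ hlam0 hlam1)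
      rw [hts]
      refine le_trans ?_ hGp.2.2
      rw [SparseAux.volume_toSet, SparseAux.volume_toSet]
      have hside : ((hex.choose.2).dilate lam hlam0).side = lam * (hex.choose.2).side := rfl
      rw [hside]
      rw [← ENNReal.ofReal_mul (by positivity), ← ENNReal.ofReal_mul (by norm_num)]
      apply ENNReal.ofReal_le_ofReal
      have hlamd : (0 : ℝ) < lam ^ d := by positivity
      have heq : 1 / (2 * lam ^ d) * (lam * (hex.choose.2).side) ^ d
          = 1 / 2 * (hex.choose.2).side ^ d := by
        rw [mul_pow]
        field_simp
      rw [heq]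
    · rintro Q ⟨p, hpJ, R, hRF, rfl⟩ Q' ⟨p', hp'J, R', hR'F, rfl⟩ hQQ
      have hex : ∃ pr : (ℕ × (Fin d → Fin 3)) × Cube d,
          pr.1 ∈ J ∧ pr.2 ∈ F (Pc pr.1) ∧ R.dilate lam hlam0 = pr.2.dilate lam hlam0 :=
        ⟨(p, R), hpJ, hRF, rfl⟩
      have hex' : ∃ pr : (ℕ × (Fin d → Fin 3)) × Cube d,
          pr.1 ∈ J ∧ pr.2 ∈ F (Pc pr.1) ∧ R'.dilate lam hlam0 = pr.2.dilate lam hlam0 :=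
        ⟨(p', R'), hp'J, hR'F, rfl⟩
      simp only [Function.onFun]
      beta_reduce
      rw [dif_pos hex, dif_pos hex']
      obtain ⟨ha1, ha2, ha3⟩ := hex.choose_spec
      obtain ⟨hb1, hb2, hb3⟩ := hex'.choose_spec
      have hRne : hex.choose.2 ≠ hex'.choose.2 := by
        intro hc
        apply hQQ
        rw [ha3, hb3, hc]
      by_cases hqq : hex.choose.1 = hex'.choose.1
      · rw [← hqq] at hb2 ⊢
        exact hG2 (Pc hex.choose.1) ha2 hb2 hRne
      · have hdisj : Disjoint (Pc hex.choose.1).toSet (Pc hex'.choose.1).toSet := by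
          apply SparseAux.P_disjoint L hL ha1 hb1
          intro hc
          exact hqq (Prod.ext (congrArg Prod.fst hc) (congrArg Prod.snd hc))
        exact hdisj.mono
          ((hG1 _ _ ha2).1.trans (hFsub (Pc hex.choose.1) _ ha2))
          ((hG1 _ _ hb2).1.trans (hFsub (Pc hex'.choose.1) _ hb2))
  · -- a.e. pointwise bound
    have hbd' : ∀ p : ℕ × (Fin d → Fin 3), ∀ᵐ x ∂(volume : Measure (Fin d → ℝ)),
        x ∈ (Pc p).toSet →
        (‖T f x‖₊ : ℝ≥0∞) ≤
          C * ∑' R : F (Pc p), (R : Cube d).toSet.indicator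
            (fun _ =>
              volume ((R : Cube d).dilate lam hlam0).toSet ^ (α / (d : ℝ)) *
                ((volume ((R : Cube d).dilate lam hlam0).toSet)⁻¹ *
                  ∫⁻ y in ((R : Cube d).dilate lam hlam0).toSet,
                    (‖f y‖₊ : ℝ≥0∞) ^ s) ^ (1 / s)) x := by
      intro p
      have hsupp' : Function.support f ⊆ ((Pc p).dilate lam hlam0).toSet :=
        SparseAux.support_subset_dilate hr.le hLdef hL hfr hlam0 hlam p.1 p.2
      have hind : ((Pc p).dilate lam hlam0).toSet.indicator f = f :=
        Set.indicator_eq_self.2 hsupp'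
      filter_upwards [hFbd (Pc p)] with x hx hmem
      have h := hx hmem
      rwa [hind] at h
    filter_upwards [ae_all_iff.2 hbd'] with x hx
    obtain ⟨m, k, hmk, hxm⟩ := SparseAux.cover d L hL x
    have hkey := hx (m, k) hxm
    refine hkey.trans (mul_le_mul_right ?_ C)
    set S : Set (Cube d) := {Q | ∃ p ∈ J, ∃ R ∈ F (Pc p), Q = R.dilate lam hlam0} with hS
    set B : Cube d → ℝ≥0∞ := fun Q => Q.toSet.indicator
      (fun _ => volume Q.toSet ^ (α / (d : ℝ)) *
        ((volume Q.toSet)⁻¹ * ∫⁻ y in Q.toSet, (‖f y‖₊ : ℝ≥0∞) ^ s) ^ (1 / s)) x with hB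
    have hmkJ : (m, k) ∈ J := hmk
    set ι : F (Pc (m, k)) → S := fun R =>
      ⟨(R : Cube d).dilate lam hlam0, ⟨(m, k), hmkJ, R, R.2, rfl⟩⟩ with hι
    have hιinj : Function.Injective ι := by
      intro R R' h
      have := congrArg Subtype.val h
      exact Subtype.ext (SparseAux.dilate_injective hlam0 this)
    calc (∑' R : F (Pc (m, k)), (R : Cube d).toSet.indicator
            (fun _ =>
              volume ((R : Cube d).dilate lam hlam0).toSet ^ (α / (d : ℝ)) *
                ((volume ((R : Cube d).dilate lam hlam0).toSet)⁻¹ *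
                  ∫⁻ y in ((R : Cube d).dilate lam hlam0).toSet,
                    (‖f y‖₊ : ℝ≥0∞) ^ s) ^ (1 / s)) x)
        ≤ ∑' R : F (Pc (m, k)), B ((ι R : Cube d)) := by
          apply ENNReal.tsum_le_tsum
          intro R
          by_cases hxR : x ∈ (R : Cube d).toSet
          · rw [Set.indicator_of_mem hxR]
            have hxR' : x ∈ ((R : Cube d).dilate lam hlam0).toSet :=
              SparseAux.subset_dilate _ hlam0 hlam1 hxR
            rw [hB]
            simp only
            rw [Set.indicator_of_mem hxR']
          · rw [Set.indicator_of_notMem hxR]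
            exact zero_le
      _ ≤ ∑' Q : S, B (Q : Cube d) :=
          ENNReal.tsum_comp_le_tsum_of_injective hιinj (fun Q : S => B (Q : Cube d))
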